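/- Let A be a symmetric positive definite real n×n matrix whose inverse is a weakly diagonally dominant Stieltjes matrix. Then A = Uᵀ U for some entrywise nonnegative upper triangular n×n matrix U; in particular A is completely positive with cp-rank at most n. -/

import Mathlib

open Matrix Finset
open scoped RealInnerProductSpace

noncomputable section

/-- The vertex Gramian of the simplex with vertices `v` associated with vertex `v ℓ`. -/
def vGram {n : ℕ} (v : Fin (n + 1) → EuclideanSpace ℝ (Fin n)) (ℓ : Fin (n + 1)) :
    Matrix {k : Fin (n + 1) // k ≠ ℓ} {k : Fin (n + 1) // k ≠ ℓ} ℝ :=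
  Matrix.of fun i j => ⟪v i.1 - v ℓ, v j.1 - v ℓ⟫

/-- A Stieltjes matrix: symmetric positive definite with nonpositive off-diagonal entries. -/
def IsStieltjes {ι : Type*} [Fintype ι] (M : Matrix ι ι ℝ) : Prop :=
  M.PosDef ∧ ∀ i j, i ≠ j → M i j ≤ 0

/-- Weakly diagonally dominant: `M e ≥ 0` entrywise for the all-ones vector `e`. -/
def IsWDD {ι : Type*} [Fintype ι] (M : Matrix ι ι ℝ) : Prop :=
  ∀ i, 0 ≤ ∑ j, M i j

/-- Pointwise weakly diagonally dominant: each diagonal entry is maximal in its row. -/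
def PWDD {ι : Type*} (M : Matrix ι ι ℝ) : Prop :=
  ∀ i j, M i j ≤ M i i

/-- The orthogonal projection of `x` onto the affine span of `{v k : k ∈ s}`
lies in the convex hull of `{v k : k ∈ s}`. -/
def ProjInHull {n : ℕ} (x : EuclideanSpace ℝ (Fin n))
    (v : Fin (n + 1) → EuclideanSpace ℝ (Fin n)) (s : Set (Fin (n + 1))) : Prop :=
  ∃ p ∈ convexHull ℝ (v '' s), ∀ a ∈ s, ∀ b ∈ s, ⟪x - p, v a - v b⟫ = 0

/-- All facets of the simplex are nonobtuse: each vertex `v i` projects, for each `j ≠ i`,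
into the convex hull of the vertices other than `v i, v j`. -/
def FacetsNonobtuse {n : ℕ} (v : Fin (n + 1) → EuclideanSpace ℝ (Fin n)) : Prop :=
  ∀ i j : Fin (n + 1), i ≠ j → ProjInHull (v i) v {k | k ≠ i ∧ k ≠ j}

/-- `q` is an inward normal to the facet opposite `v j`. -/
def IsInwardNormal {n : ℕ} (v : Fin (n + 1) → EuclideanSpace ℝ (Fin n)) (j : Fin (n + 1))
    (q : EuclideanSpace ℝ (Fin n)) : Prop :=
  q ≠ 0 ∧ (∀ a b : Fin (n + 1), a ≠ j → b ≠ j → ⟪q, v a - v b⟫ = 0) ∧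
    ∀ k : Fin (n + 1), k ≠ j → 0 < ⟪q, v j - v k⟫

/-- The `j`-th column of `A` is a blocking column: no off-diagonal entry of column `j`
is minimal in its row. -/
def IsBlockingCol {ι : Type*} (A : Matrix ι ι ℝ) (j : ι) : Prop :=
  ∀ i, i ≠ j → ∃ k, A i k < A i j

/-- `A` is nonblocking: every column has an off-diagonal entry minimal in its row. -/
def IsNonblocking {ι : Type*} (A : Matrix ι ι ℝ) : Prop :=
  ∀ j, ∃ i, i ≠ j ∧ ∀ k, A i j ≤ A i k

/-- A (symmetric nonnegative) ultrametric matrix. -/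
def IsUltra {ι : Type*} (A : Matrix ι ι ℝ) : Prop :=
  (∀ i j, 0 ≤ A i j) ∧ (∀ i j, A i j ≤ A i i) ∧ ∀ i j k, min (A i k) (A k j) ≤ A i j

/-- The principal submatrix of `A` with rows and columns restricted to `s`. -/
def subMat {ι : Type*} (A : Matrix ι ι ℝ) (s : Finset ι) :
    Matrix {x // x ∈ s} {x // x ∈ s} ℝ :=
  A.submatrix (fun i => i.1) (fun j => j.1)

/-- The principal submatrix of `A` obtained by deleting row and column `m`. -/
def delMat {ι : Type*} (A : Matrix ι ι ℝ) (m : ι) : Matrix {i // i ≠ m} {i // i ≠ m} ℝ :=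
  A.submatrix (fun i => i.1) (fun j => j.1)

section Tetra

variable {V : Type*} [NormedAddCommGroup V] [InnerProductSpace ℝ V]

/-- The triangle with vertices `a, b, c` is nonobtuse. -/
def NonobtuseTri (a b c : V) : Prop :=
  0 ≤ ⟪b - a, c - a⟫ ∧ 0 ≤ ⟪a - b, c - b⟫ ∧ 0 ≤ ⟪a - c, b - c⟫

/-- The sub-orthocentric set of the triangle `a b c`: the union over the vertices of the
closed segments from the vertex to the orthocenter. -/
def SubOrthoSet (a b c : V) : Set V :=
  {x | ∃ h, h ∈ affineSpan ℝ ({a, b, c} : Set V) ∧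
    ⟪h - a, b - c⟫ = 0 ∧ ⟪h - b, a - c⟫ = 0 ∧
    (x ∈ segment ℝ a h ∨ x ∈ segment ℝ b h ∨ x ∈ segment ℝ c h)}

/-- `p` is the orthogonal projection of `x` onto the affine span of `{a, b, c}`. -/
def IsOrthProjTri (x p a b c : V) : Prop :=
  p ∈ affineSpan ℝ ({a, b, c} : Set V) ∧ ⟪x - p, b - a⟫ = 0 ∧ ⟪x - p, c - a⟫ = 0

/-- A sub-orthocentric tetrahedron: all triangular faces are nonobtuse and each vertex
projects orthogonally into the sub-orthocentric set of its opposite face. -/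
def IsSubOrthoTetra (w : Fin 4 → V) : Prop :=
  ∀ i : Fin 4,
    NonobtuseTri (w (i.succAbove 0)) (w (i.succAbove 1)) (w (i.succAbove 2)) ∧
    ∃ p, IsOrthProjTri (w i) p (w (i.succAbove 0)) (w (i.succAbove 1)) (w (i.succAbove 2)) ∧
      p ∈ SubOrthoSet (w (i.succAbove 0)) (w (i.succAbove 1)) (w (i.succAbove 2))

end Tetra


private lemma key_chol : ∀ (n : ℕ) (M : Matrix (Fin n) (Fin n) ℝ), M.PosDef →
    (∀ i j, i ≠ j → M i j ≤ 0) →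
    ∃ R U : Matrix (Fin n) (Fin n) ℝ,
      (∀ i j, 0 ≤ U i j) ∧ (∀ i j, j < i → U i j = 0) ∧
      U * R = 1 ∧ R * U = 1 ∧ R * Rᵀ = M := by
  intro n
  induction n with
  | zero =>
    intro M _ _
    exact ⟨1, 1, fun i => i.elim0, fun i => i.elim0, by simp, by simp,
      by ext i j; exact i.elim0⟩
  | succ n ih =>
    intro M hM hoff
    have hsym : ∀ i j, M i j = M j i := by
      intro i j
      have := congrFun (congrFun hM.1 i) j
      simpa [conjTranspose_apply] using this.symm
    set d : ℝ := M (Fin.last n) (Fin.last n) with hd_def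
    have hd : 0 < d := by
      have hne : (Pi.single (Fin.last n) 1 : Fin (n+1) → ℝ) ≠ 0 := by
        intro h
        simpa using congrFun h (Fin.last n)
      have := hM.dotProduct_mulVec_pos hne
      simpa [single_dotProduct, star_trivial] using this
    set c : Fin n → ℝ := fun i => M i.castSucc (Fin.last n) with hc_def
    have hc : ∀ i, c i ≤ 0 := fun i =>
      hoff _ _ (Fin.ne_of_lt (Fin.castSucc_lt_last i))
    set S : Matrix (Fin n) (Fin n) ℝ :=
      Matrix.of fun i j => M i.castSucc j.castSucc - c i * c j / d with hS_def
    have hSentry : ∀ i j, S i j = M i.castSucc j.castSucc - c i * c j / d :=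
      fun i j => rfl
    have hSsym : ∀ i j, S i j = S j i := by
      intro i j
      rw [hSentry, hSentry, hsym i.castSucc j.castSucc]
      ring
    -- quadratic form identity yielding positive definiteness of the Schur complement
    have hSpd : S.PosDef := by
      refine Matrix.PosDef.of_dotProduct_mulVec_pos ?_ ?_
      · ext i j
        simp only [conjTranspose_apply, star_trivial]
        exact hSsym j i
      · intro x hx
        set q : ℝ := ∑ k, c k * x k with hq
        set t : ℝ := -q/d with ht
        set y : Fin (n+1) → ℝ := Fin.snoc x t with hy
        have hy0 : y ≠ 0 := by
          obtain ⟨i, hi⟩ := Function.ne_iff.mp hx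
          intro h
          apply hi
          have := congrFun h i.castSucc
          simpa [hy, Fin.snoc_castSucc] using this
        have hMy := hM.dotProduct_mulVec_pos hy0
        set P : ℝ := ∑ i, ∑ j, x i * (M i.castSucc j.castSucc * x j) with hP
        have h1 : x ⬝ᵥ (S *ᵥ x) = P - q * q / d := by
          have e : x ⬝ᵥ (S *ᵥ x)
              = ∑ i, ∑ j, (x i * (M i.castSucc j.castSucc * x j)
                - (c i * x i) * (c j * x j) / d) := by
            simp only [dotProduct, mulVec, hS_def, Matrix.of_apply, Finset.mul_sum]
            refine Finset.sum_congr rfl fun i _ => Finset.sum_congr rfl fun j _ => ?_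
            ring
          rw [e]
          have hqq : q * q = ∑ i, ∑ j, (c i * x i) * (c j * x j) := by
            rw [hq, Finset.sum_mul_sum]
          rw [hP, hqq, Finset.sum_div, ← Finset.sum_sub_distrib]
          refine Finset.sum_congr rfl fun i _ => ?_
          rw [Finset.sum_div, ← Finset.sum_sub_distrib]
        have h2 : y ⬝ᵥ (M *ᵥ y) = P + q * t + t * q + t * (d * t) := by
          have expand : y ⬝ᵥ (M *ᵥ y)
              = (∑ i, x i * ((∑ j, M i.castSucc j.castSucc * x j)
                  + M i.castSucc (Fin.last n) * t))
                + t * ((∑ j, M (Fin.last n) j.castSucc * x j)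
                  + M (Fin.last n) (Fin.last n) * t) := by
            simp only [hy, dotProduct, mulVec, Fin.sum_univ_castSucc, Fin.snoc_castSucc,
              Fin.snoc_last]
          rw [expand]
          have e1 : ∑ i, x i * ((∑ j, M i.castSucc j.castSucc * x j)
              + M i.castSucc (Fin.last n) * t) = P + q * t := by
            simp only [mul_add, Finset.sum_add_distrib]
            congr 1
            · rw [hP]
              exact Finset.sum_congr rfl fun i _ => by
                rw [Finset.mul_sum]
            · rw [hq, Finset.sum_mul]
              exact Finset.sum_congr rfl fun i _ => by rw [hc_def]; ring
          have e2 : ∑ j, M (Fin.last n) j.castSucc * x j = q := by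
            rw [hq]
            exact Finset.sum_congr rfl fun j _ => by
              rw [hc_def, ← hsym]
          rw [e1, e2, ← hd_def]
          ring
        have key : x ⬝ᵥ (S *ᵥ x) = y ⬝ᵥ (M *ᵥ y) := by
          rw [h1, h2, ht]
          field_simp
          ring
        calc (0:ℝ) < star y ⬝ᵥ (M *ᵥ y) := hMy
          _ = y ⬝ᵥ (M *ᵥ y) := by rw [star_trivial]
          _ = x ⬝ᵥ (S *ᵥ x) := key.symm
          _ = star x ⬝ᵥ (S *ᵥ x) := by rw [star_trivial]
    have hSoff : ∀ i j, i ≠ j → S i j ≤ 0 := by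
      intro i j hij
      rw [hSentry]
      have h1 : M i.castSucc j.castSucc ≤ 0 :=
        hoff _ _ (fun h => hij (Fin.castSucc_injective n h))
      have h2 : 0 ≤ c i * c j / d := div_nonneg
        (by simpa [neg_mul_neg] using mul_nonneg (neg_nonneg.2 (hc i)) (neg_nonneg.2 (hc j)))
        hd.le
      linarith
    obtain ⟨R₁, U₁, hU₁0, hU₁tri, hU₁R₁, hR₁U₁, hR₁R₁⟩ := ih S hSpd hSoff
    set sd : ℝ := Real.sqrt d with hsd_def
    have hsd : 0 < sd := Real.sqrt_pos.mpr hd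
    have hsd2 : sd * sd = d := Real.mul_self_sqrt hd.le
    set u' : Fin n → ℝ := fun i => -(∑ k, U₁ i k * c k)/d with hu'_def
    have hu'0 : ∀ i, 0 ≤ u' i := by
      intro i
      apply div_nonneg _ hd.le
      rw [neg_nonneg]
      exact Finset.sum_nonpos fun k _ => mul_nonpos_of_nonneg_of_nonpos (hU₁0 i k) (hc k)
    set R : Matrix (Fin (n+1)) (Fin (n+1)) ℝ := Matrix.of fun i =>
      Fin.lastCases (fun j => Fin.lastCases sd (fun _ => 0) j)
        (fun i' j => Fin.lastCases (c i' / sd) (fun j' => R₁ i' j') j) i with hR_def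
    set U : Matrix (Fin (n+1)) (Fin (n+1)) ℝ := Matrix.of fun i =>
      Fin.lastCases (fun j => Fin.lastCases (1/sd) (fun _ => 0) j)
        (fun i' j => Fin.lastCases (u' i') (fun j' => U₁ i' j') j) i with hU_def
    have hRcc : ∀ i j : Fin n, R i.castSucc j.castSucc = R₁ i j := by
      intro i j; simp [hR_def]
    have hRcl : ∀ i : Fin n, R i.castSucc (Fin.last n) = c i / sd := by
      intro i; simp [hR_def]
    have hRlc : ∀ j : Fin n, R (Fin.last n) j.castSucc = 0 := by
      intro j; simp [hR_def]
    have hRll : R (Fin.last n) (Fin.last n) = sd := by simp [hR_def]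
    have hUcc : ∀ i j : Fin n, U i.castSucc j.castSucc = U₁ i j := by
      intro i j; simp [hU_def]
    have hUcl : ∀ i : Fin n, U i.castSucc (Fin.last n) = u' i := by
      intro i; simp [hU_def]
    have hUlc : ∀ j : Fin n, U (Fin.last n) j.castSucc = 0 := by
      intro j; simp [hU_def]
    have hUll : U (Fin.last n) (Fin.last n) = 1/sd := by simp [hU_def]
    have hRUc : ∀ i, ∑ k, R₁ i k * u' k = -(c i)/d := by
      intro i
      have h1 : ∀ k, R₁ i k * u' k = (∑ l, -(R₁ i k * (U₁ k l * c l)))/d := by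
        intro k
        simp only [hu'_def]
        rw [show ∑ l, -(R₁ i k * (U₁ k l * c l)) = -(R₁ i k * ∑ l, U₁ k l * c l) from by
          rw [Finset.sum_neg_distrib, ← Finset.mul_sum]]
        ring
      calc ∑ k, R₁ i k * u' k = (∑ k, ∑ l, -(R₁ i k * (U₁ k l * c l)))/d := by
            rw [Finset.sum_div]
            exact Finset.sum_congr rfl fun k _ => h1 k
        _ = (∑ l, ∑ k, -(R₁ i k * (U₁ k l * c l)))/d := by rw [Finset.sum_comm]
        _ = (∑ l, -((R₁ * U₁) i l * c l))/d := by
            congr 1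
            refine Finset.sum_congr rfl fun l _ => ?_
            rw [Matrix.mul_apply,
              show (∑ k, R₁ i k * U₁ k l) * c l = ∑ k, R₁ i k * (U₁ k l * c l) from by
                rw [Finset.sum_mul]
                exact Finset.sum_congr rfl fun k _ => by ring,
              Finset.sum_neg_distrib]
        _ = -(c i)/d := by
            rw [hR₁U₁, Finset.sum_neg_distrib]
            congr 2
            simp [Matrix.one_apply, ite_mul]
    have hone : ∀ i j : Fin n, (1 : Matrix (Fin (n+1)) (Fin (n+1)) ℝ) i.castSucc j.castSucc
        = (1 : Matrix (Fin n) (Fin n) ℝ) i j := by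
      intro i j
      by_cases h : i = j
      · subst h; rw [Matrix.one_apply_eq, Matrix.one_apply_eq]
      · rw [Matrix.one_apply_ne h,
          Matrix.one_apply_ne (fun hh => h (Fin.castSucc_injective n hh))]
    refine ⟨R, U, ?_, ?_, ?_, ?_, ?_⟩
    · -- entrywise nonnegativity of U
      intro i j
      induction i using Fin.lastCases with
      | last =>
        induction j using Fin.lastCases with
        | last => rw [hUll]; positivity
        | cast j => rw [hUlc]
      | cast i =>
        induction j using Fin.lastCases with
        | last => rw [hUcl]; exact hu'0 i
        | cast j => rw [hUcc]; exact hU₁0 i j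
    · -- upper triangularity of U
      intro i j hji
      induction i using Fin.lastCases with
      | last =>
        induction j using Fin.lastCases with
        | last => exact absurd hji (lt_irrefl _)
        | cast j => rw [hUlc]
      | cast i =>
        induction j using Fin.lastCases with
        | last => exact absurd hji (not_lt.mpr (Fin.castSucc_lt_last i).le)
        | cast j => rw [hUcc]; exact hU₁tri i j (by exact_mod_cast hji)
    · -- U * R = 1
      ext i j
      rw [Matrix.mul_apply, Fin.sum_univ_castSucc]
      induction i using Fin.lastCases with
      | last =>
        induction j using Fin.lastCases with
        | last =>
          rw [Finset.sum_eq_zero (fun k _ => by rw [hUlc]; ring), hUll, hRll,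
            Matrix.one_apply_eq]
          field_simp
          ring
        | cast j =>
          rw [Finset.sum_eq_zero (fun k _ => by rw [hUlc]; ring), hUll, hRlc,
            Matrix.one_apply_ne (Fin.ne_of_gt (Fin.castSucc_lt_last j))]
          ring
      | cast i =>
        induction j using Fin.lastCases with
        | last =>
          have e : ∑ k : Fin n, U i.castSucc k.castSucc * R k.castSucc (Fin.last n)
              = (∑ k, U₁ i k * c k) / sd := by
            rw [Finset.sum_div]
            exact Finset.sum_congr rfl fun k _ => by rw [hUcc, hRcl]; ring
          rw [e, hUcl, hRll, Matrix.one_apply_ne (Fin.ne_of_lt (Fin.castSucc_lt_last i))]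
          simp only [hu'_def]
          rw [← hsd2]
          field_simp
          ring
        | cast j =>
          have e : ∑ k : Fin n, U i.castSucc k.castSucc * R k.castSucc j.castSucc
              = (U₁ * R₁) i j := by
            rw [Matrix.mul_apply]
            exact Finset.sum_congr rfl fun k _ => by rw [hUcc, hRcc]
          rw [e, hU₁R₁, hUcl, hRlc, hone]
          ring
    · -- R * U = 1
      ext i j
      rw [Matrix.mul_apply, Fin.sum_univ_castSucc]
      induction i using Fin.lastCases with
      | last =>
        induction j using Fin.lastCases with
        | last =>
          rw [Finset.sum_eq_zero (fun k _ => by rw [hRlc]; ring), hRll, hUll,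
            Matrix.one_apply_eq]
          field_simp
          ring
        | cast j =>
          rw [Finset.sum_eq_zero (fun k _ => by rw [hRlc]; ring), hRll, hUlc,
            Matrix.one_apply_ne (Fin.ne_of_gt (Fin.castSucc_lt_last j))]
          ring
      | cast i =>
        induction j using Fin.lastCases with
        | last =>
          have e : ∑ k : Fin n, R i.castSucc k.castSucc * U k.castSucc (Fin.last n)
              = ∑ k, R₁ i k * u' k := by
            exact Finset.sum_congr rfl fun k _ => by rw [hRcc, hUcl]
          rw [e, hRUc, hRcl, hUll,
            Matrix.one_apply_ne (Fin.ne_of_lt (Fin.castSucc_lt_last i)), ← hsd2]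
          field_simp
          ring
        | cast j =>
          have e : ∑ k : Fin n, R i.castSucc k.castSucc * U k.castSucc j.castSucc
              = (R₁ * U₁) i j := by
            rw [Matrix.mul_apply]
            exact Finset.sum_congr rfl fun k _ => by rw [hRcc, hUcc]
          rw [e, hR₁U₁, hRcl, hUlc, hone]
          ring
    · -- R * Rᵀ = M
      ext i j
      rw [Matrix.mul_apply, Fin.sum_univ_castSucc]
      simp only [Matrix.transpose_apply]
      induction i using Fin.lastCases with
      | last =>
        induction j using Fin.lastCases with
        | last =>
          rw [Finset.sum_eq_zero (fun k _ => by rw [hRlc]; ring), hRll, hsd2, ← hd_def]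
          ring
        | cast j =>
          rw [Finset.sum_eq_zero (fun k _ => by rw [hRlc]; ring), hRll, hRcl,
            hsym (Fin.last n) j.castSucc]
          field_simp
          simp [hc_def]
      | cast i =>
        induction j using Fin.lastCases with
        | last =>
          rw [Finset.sum_eq_zero (fun k _ => by rw [hRlc]; ring), hRcl, hRll]
          field_simp
          simp [hc_def]
        | cast j =>
          have e : ∑ k : Fin n, R i.castSucc k.castSucc * R j.castSucc k.castSucc
              = (R₁ * R₁ᵀ) i j := by
            rw [Matrix.mul_apply]
            exact Finset.sum_congr rfl fun k _ => by
              rw [hRcc, hRcc, Matrix.transpose_apply]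
          rw [e, hR₁R₁, hRcl, hRcl, hSentry, div_mul_div_comm, hsd2]
          ring

theorem stmt3 (n : ℕ) (A : Matrix (Fin n) (Fin n) ℝ) (hA : A.PosDef)
    (h1 : IsStieltjes A⁻¹) (h2 : IsWDD A⁻¹) :
    ∃ U : Matrix (Fin n) (Fin n) ℝ,
      (∀ i j, 0 ≤ U i j) ∧ (∀ i j : Fin n, j < i → U i j = 0) ∧ A = Uᵀ * U := by
  obtain ⟨hMpd, hMoff⟩ := h1
  obtain ⟨R, U, hU0, hUtri, hUR, hRU, hRRt⟩ := key_chol n A⁻¹ hMpd hMoff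
  refine ⟨U, hU0, hUtri, ?_⟩
  have h1' : Uᵀ * U * A⁻¹ = 1 := by
    rw [← hRRt, mul_assoc, ← mul_assoc U R, hUR, one_mul, ← Matrix.transpose_mul, hRU,
      Matrix.transpose_one]
  have hinv : A⁻¹ * A = 1 :=
    Matrix.nonsing_inv_mul A (isUnit_iff_ne_zero.mpr hA.det_pos.ne')
  calc A = 1 * A := (one_mul A).symm
    _ = Uᵀ * U * A⁻¹ * A := by rw [h1']
    _ = Uᵀ * U * (A⁻¹ * A) := by rw [mul_assoc]
    _ = Uᵀ * U := by rw [hinv, mul_one]
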